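/- The group of affine transformations x ↦ e·x + f of F_8 (with e ∈ F_8^×, f ∈ F_8) acts simply transitively on the set of 3-element subsets of F_8; in particular, for any two 3-element subsets S, T of F_8 there is a unique affine transformation mapping S onto T. -/
import Mathlib

private abbrev F8 := GaloisField 2 3

private lemma affine_injective (p : F8ˣ × F8) :
    Function.Injective (fun x : F8 => (p.1 : F8) * x + p.2) := by
  intro a b hab
  simp only at hab
  exact mul_left_cancel₀ (Units.ne_zero p.1) (add_right_cancel hab)

private lemma stab_trivial (e : F8ˣ) (f : F8) (S : Set F8) (hS : S.ncard = 3)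
    (h : (fun x => (e : F8) * x + f) '' S = S) : e = 1 ∧ f = 0 := by
  classical
  haveI : Fintype F8 := Fintype.ofFinite _
  set g : F8 → F8 := fun x => (e : F8) * x + f with hg
  have hinj : Function.Injective g := affine_injective (e, f)
  have hbij : Set.BijOn g S S := by
    have := hinj.injOn.bijOn_image (s := S)
    rwa [h] at this
  haveI : Fintype ↥S := S.toFinite.fintype
  let σ : Equiv.Perm ↥S := (hbij.equiv g).trans (Equiv.refl _)
  have hσ : ∀ x : ↥S, (σ x : F8) = g (x : F8) := fun x => rfl
  have hcards : Fintype.card ↥S = 3 := by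
    rw [← Nat.card_eq_fintype_card, Nat.card_coe_set_eq, hS]
  have h6 : σ ^ 6 = 1 := by
    have := pow_card_eq_one' (G := Equiv.Perm ↥S) (x := σ)
    rwa [Nat.card_eq_fintype_card, Fintype.card_perm, hcards,
      show Nat.factorial 3 = 6 from rfl] at this
  have hiter : ∀ (n : ℕ) (x : ↥S), ((σ ^ n) x : F8) = g^[n] (x : F8) := by
    intro n
    induction n with
    | zero => intro x; simp
    | succ n ih =>
      intro x
      rw [pow_succ, Function.iterate_succ_apply, Equiv.Perm.mul_apply]
      rw [ih (σ x), hσ]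
  have hfix : ∀ x ∈ S, g^[6] x = x := by
    intro x hx
    have := hiter 6 ⟨x, hx⟩
    rw [h6] at this
    simpa using this.symm
  have hdiff : ∀ (n : ℕ) (a b : F8), g^[n] a - g^[n] b = (e : F8) ^ n * (a - b) := by
    intro n
    induction n with
    | zero => intro a b; simp
    | succ n ih =>
      intro a b
      rw [Function.iterate_succ_apply', Function.iterate_succ_apply']
      have : g (g^[n] a) - g (g^[n] b) = (e : F8) * (g^[n] a - g^[n] b) := by
        simp only [hg]; ring
      rw [this, ih a b, pow_succ]; ring
  obtain ⟨x, y, z, hxy, hxz, hyz, hSxyz⟩ := Set.ncard_eq_three.mp hS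
  have hxS : x ∈ S := by rw [hSxyz]; simp
  have hyS : y ∈ S := by rw [hSxyz]; simp
  have he6F : (e : F8) ^ 6 = 1 := by
    have hd : (e : F8) ^ 6 * (x - y) = x - y := by
      rw [← hdiff 6 x y, hfix x hxS, hfix y hyS]
    have hxy' : x - y ≠ 0 := sub_ne_zero.mpr hxy
    have hd' : (e : F8) ^ 6 * (x - y) = 1 * (x - y) := by rw [hd, one_mul]
    exact mul_right_cancel₀ hxy' hd'
  have he6 : e ^ 6 = 1 := Units.ext (by push_cast; exact he6F)
  have he7 : e ^ 7 = 1 := by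
    have := pow_card_eq_one' (G := F8ˣ) (x := e)
    have hc : Nat.card F8ˣ = 7 := by
      rw [Nat.card_units, GaloisField.card 2 3 (by norm_num)]
      norm_num
    rwa [hc] at this
  have he1 : e = 1 := by
    have : e ^ 7 = e ^ 6 * e := pow_succ e 6
    rw [he6, one_mul, he7] at this
    exact this.symm
  refine ⟨he1, ?_⟩
  -- now g is translation by f
  have htrans : (fun x : F8 => x + f) '' S = S := by
    have hgid : g = fun x : F8 => x + f := by
      funext t; simp [hg, he1]
    rw [← hgid]; exact h
  have hcardFS : S.toFinset.card = 3 := by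
    rw [← Set.ncard_eq_toFinset_card']; exact hS
  have himg : Finset.image (fun x => x + f) S.toFinset = S.toFinset := by
    rw [← Set.toFinset_image]
    exact Set.toFinset_congr htrans
  have hsum := Finset.sum_image (f := id) (g := fun x : F8 => x + f) (s := S.toFinset)
    (fun a _ b _ hab => by simpa using hab)
  rw [himg] at hsum
  simp only [id] at hsum
  rw [Finset.sum_add_distrib, Finset.sum_const, hcardFS] at hsum
  have h2 : ((2 : ℕ) : F8) = 0 := CharP.cast_eq_zero F8 2
  have h3f : (3 : ℕ) • f = f := by
    rw [nsmul_eq_mul]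
    have h3 : ((3 : ℕ) : F8) = 1 := by
      push_cast at h2 ⊢
      rw [show (3 : F8) = 2 + 1 by norm_num, h2, zero_add]
    rw [h3, one_mul]
  rw [h3f] at hsum
  exact left_eq_add.mp hsum

private lemma affine_cancel (S : Set F8) (hS : S.ncard = 3) (p q : F8ˣ × F8)
    (h : (fun x => (p.1 : F8) * x + p.2) '' S = (fun x => (q.1 : F8) * x + q.2) '' S) :
    q = p := by
  set e : F8ˣ := p.1⁻¹ * q.1 with he
  set f : F8 := (p.1 : F8)⁻¹ * (q.2 - p.2) with hf
  set ginv : F8 → F8 := fun x => (p.1 : F8)⁻¹ * (x - p.2) with hginv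
  have hcomp1 : (ginv ∘ fun x => (p.1 : F8) * x + p.2) = id := by
    funext t
    simp only [hginv, Function.comp_apply, id]
    rw [add_sub_cancel_right, inv_mul_cancel_left₀ (Units.ne_zero p.1)]
  have hcomp2 : (fun x => (e : F8) * x + f) = (ginv ∘ fun x => (q.1 : F8) * x + q.2) := by
    funext t
    simp only [hginv, Function.comp_apply, he, hf, Units.val_mul, Units.val_inv_eq_inv_val]
    ring
  have himg : (fun x => (e : F8) * x + f) '' S = S := by
    rw [hcomp2, Set.image_comp, ← h, ← Set.image_comp, hcomp1, Set.image_id]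
  obtain ⟨he1, hf0⟩ := stab_trivial e f S hS himg
  have h1 : q.1 = p.1 := by
    rw [he] at he1
    exact (inv_mul_eq_one.mp he1).symm
  have h2 : q.2 = p.2 := by
    rw [hf] at hf0
    have := (mul_eq_zero.mp hf0).resolve_left
      (inv_ne_zero (Units.ne_zero p.1))
    exact sub_eq_zero.mp this
  exact Prod.ext h1 h2

/-- The group of affine transformations `x ↦ e·x + f` of `𝔽₈` acts simply
transitively on the set of 3-element subsets of `𝔽₈`: for any two 3-element
subsets `S, T` there is a unique affine transformation mapping `S` onto `T`. -/
theorem stmt_7 (S T : Set (GaloisField 2 3)) (hS : S.ncard = 3) (hT : T.ncard = 3) :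
    ∃! p : (GaloisField 2 3)ˣ × GaloisField 2 3,
      (fun x => (p.1 : GaloisField 2 3) * x + p.2) '' S = T := by
  classical
  haveI : Fintype F8 := Fintype.ofFinite _
  have n8 : Fintype.card F8 = 8 := by
    rw [← Nat.card_eq_fintype_card]; exact GaloisField.card 2 3 (by norm_num)
  have hSc : S.toFinset.card = 3 := by
    rw [← Set.ncard_eq_toFinset_card']; exact hS
  have hTc : T.toFinset.card = 3 := by
    rw [← Set.ncard_eq_toFinset_card']; exact hT
  let φ : F8ˣ × F8 → {A : Finset F8 // A.card = 3} := fun p =>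
    ⟨S.toFinset.image (fun x => (p.1 : F8) * x + p.2), by
      rw [Finset.card_image_of_injective _ (affine_injective p), hSc]⟩
  have hcoe : ∀ p : F8ˣ × F8,
      ((φ p : Finset F8) : Set F8) = (fun x => (p.1 : F8) * x + p.2) '' S := by
    intro p
    simp [φ, Finset.coe_image, Set.coe_toFinset]
  have hφinj : Function.Injective φ := by
    intro p q hpq
    refine (affine_cancel S hS p q ?_).symm
    have := congrArg (fun A : {A : Finset F8 // A.card = 3} => ((A : Finset F8) : Set F8)) hpq
    simpa only [hcoe] using this
  have hcard : Fintype.card (F8ˣ × F8) = Fintype.card {A : Finset F8 // A.card = 3} := by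
    rw [Fintype.card_prod, Fintype.card_units, n8, Fintype.card_finset_len, n8]
    decide
  have hφsurj : Function.Surjective φ :=
    ((Fintype.bijective_iff_injective_and_card φ).mpr ⟨hφinj, hcard⟩).2
  obtain ⟨p, hp⟩ := hφsurj ⟨T.toFinset, hTc⟩
  refine ⟨p, ?_, ?_⟩
  · have := congrArg (fun A : {A : Finset F8 // A.card = 3} => ((A : Finset F8) : Set F8)) hp
    simpa only [hcoe, Set.coe_toFinset] using this
  · intro q hq
    have hpT : (fun x => (p.1 : F8) * x + p.2) '' S = T := by
      have := congrArg (fun A : {A : Finset F8 // A.card = 3} => ((A : Finset F8) : Set F8)) hp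
      simpa only [hcoe, Set.coe_toFinset] using this
    exact affine_cancel S hS p q (hpT.trans hq.symm)
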